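/- Let μ ∈ 𝒫({−1,1}^n) with uniform single-site marginals μ(σ_i = ±1) = 1/2 for all i, μ_t the discrete-time recombination iterate, and π the uniform measure on {−1,1}^n. Then ‖μ_t − π‖_TV ≤ (1/2) n(n−1) 2^{−t}. -/

import Mathlib

open MeasureTheory
open scoped ENNReal

/-- The Boolean cube `{−1,1}^n`. -/
abbrev Cube (n : ℕ) := Fin n → ({-1, 1} : Set ℤ)

instance : Nonempty ({-1, 1} : Set ℤ) := ⟨⟨1, by simp⟩⟩

/-- The recombination `μ_A ⊗ ν_{A^c}`. -/
noncomputable def recomb (n : ℕ) (A : Finset (Fin n)) (μ ν : Measure (Cube n)) :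
    Measure (Cube n) :=
  Measure.map (fun p : Cube n × Cube n => fun i => if i ∈ A then p.1 i else p.2 i) (μ.prod ν)

/-- The collision product `μ∘ν = 2^{−n} Σ_{A⊆[n]} μ_A ⊗ ν_{A^c}`. -/
noncomputable def collision (n : ℕ) (μ ν : Measure (Cube n)) : Measure (Cube n) :=
  ((2 : ℝ≥0∞) ^ n)⁻¹ • ∑ A : Finset (Fin n), recomb n A μ ν

/-- The discrete-time nonlinear recombination dynamics. -/
noncomputable def iterateRec (n : ℕ) (μ : Measure (Cube n)) : ℕ → Measure (Cube n)
  | 0 => μ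
  | t + 1 => collision n (iterateRec n μ t) (iterateRec n μ t)

/-- Total variation distance. -/
noncomputable def tvDist {α : Type*} [MeasurableSpace α] (μ ν : Measure α) : ℝ :=
  ⨆ E : {E : Set α // MeasurableSet E}, |(μ E.1).toReal - (ν E.1).toReal|

/-! ### Auxiliary development -/

lemma measAll {n : ℕ} (s : Set (Cube n)) : MeasurableSet s := (Set.to_countable s).measurableSet

/-- measure of any set is the sum of its singletons -/
lemma meas_eq_sum {n : ℕ} (ν : Measure (Cube n)) (E : Set (Cube n)) (T : Finset (Cube n))
    (hT : ↑T = E) : ν E = ∑ σ ∈ T, ν {σ} := by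
  subst hT
  have h1 : (T : Set (Cube n)) = ⋃ σ ∈ T, {σ} := by ext x; simp
  rw [h1, measure_biUnion_finset ?_ (fun _ _ => measAll _)]
  intro a _ b _ hab
  simp [Function.onFun, Set.disjoint_singleton, hab]

noncomputable def pushMap {n : ℕ} (κ : Type) [Fintype κ] (μ : Measure (Cube n)) (f : Fin n → κ) :
    Measure (Cube n) :=
  Measure.map (fun X : κ → Cube n => fun i => X (f i) i) (Measure.pi fun _ : κ => μ)

instance {n : ℕ} (κ : Type) [Fintype κ] (μ : Measure (Cube n)) [IsProbabilityMeasure μ]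
    (f : Fin n → κ) : IsProbabilityMeasure (pushMap κ μ f) :=
  Measure.isProbabilityMeasure_map (measurable_of_countable _).aemeasurable

/-- cylinder formula for `pushMap` -/
lemma pushMap_cyl {n : ℕ} (κ : Type) [Fintype κ] (μ : Measure (Cube n)) [IsProbabilityMeasure μ]
    (f : Fin n → κ) (A : Finset (Fin n)) (σ : Cube n) :
    pushMap κ μ f {y | ∀ i ∈ A, y i = σ i}
      = ∏ j : κ, μ {x : Cube n | ∀ i ∈ A, f i = j → x i = σ i} := by
  rw [pushMap, Measure.map_apply (measurable_of_countable _) (measAll _)]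
  have : (fun X : κ → Cube n => fun i => X (f i) i) ⁻¹' {y | ∀ i ∈ A, y i = σ i}
      = Set.univ.pi fun j => {x : Cube n | ∀ i ∈ A, f i = j → x i = σ i} := by
    ext X
    simp only [Set.mem_preimage, Set.mem_setOf_eq, Set.mem_pi, Set.mem_univ, forall_true_left]
    constructor
    · intro h j i hiA hfi; subst hfi; exact h i hiA
    · intro h i hiA; exact h (f i) i hiA rfl
  rw [this, Measure.pi_pi]

lemma cyl_univ {n : ℕ} (σ : Cube n) :
    {y : Cube n | ∀ i ∈ (Finset.univ : Finset (Fin n)), y i = σ i} = {σ} := by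
  ext y; simp [funext_iff]

lemma pushMap_singleton {n : ℕ} (κ : Type) [Fintype κ] (μ : Measure (Cube n))
    [IsProbabilityMeasure μ] (f : Fin n → κ) (σ : Cube n) :
    pushMap κ μ f {σ} = ∏ j : κ, μ {x : Cube n | ∀ i, f i = j → x i = σ i} := by
  rw [← cyl_univ σ, pushMap_cyl]
  simp

lemma recomb_singleton {n : ℕ} (A : Finset (Fin n)) (ν ρ : Measure (Cube n))
    [IsProbabilityMeasure ν] [IsProbabilityMeasure ρ] (σ : Cube n) :
    recomb n A ν ρ {σ}
      = ν {a : Cube n | ∀ i ∈ A, a i = σ i} * ρ {b : Cube n | ∀ i ∈ Aᶜ, b i = σ i} := by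
  rw [recomb, Measure.map_apply (measurable_of_countable _) (measAll _)]
  have : (fun p : Cube n × Cube n => fun i => if i ∈ A then p.1 i else p.2 i) ⁻¹' {σ}
      = {a : Cube n | ∀ i ∈ A, a i = σ i} ×ˢ {b : Cube n | ∀ i ∈ Aᶜ, b i = σ i} := by
    ext ⟨a, b⟩
    simp only [Set.mem_preimage, Set.mem_singleton_iff, Set.mem_prod, Set.mem_setOf_eq,
      funext_iff, Finset.mem_compl]
    constructor
    · intro h
      refine ⟨fun i hi => ?_, fun i hi => ?_⟩
      · have := h i; rwa [if_pos hi] at this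
      · have := h i; rwa [if_neg hi] at this
    · intro ⟨h1, h2⟩ i
      by_cases hi : i ∈ A
      · rw [if_pos hi]; exact h1 i hi
      · rw [if_neg hi]; exact h2 i hi
  rw [this, Measure.prod_prod]

instance recomb_prob {n : ℕ} (A : Finset (Fin n)) (ν ρ : Measure (Cube n))
    [IsProbabilityMeasure ν] [IsProbabilityMeasure ρ] : IsProbabilityMeasure (recomb n A ν ρ) :=
  Measure.isProbabilityMeasure_map (measurable_of_countable _).aemeasurable

instance collision_prob {n : ℕ} (ν ρ : Measure (Cube n))
    [IsProbabilityMeasure ν] [IsProbabilityMeasure ρ] :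
    IsProbabilityMeasure (collision n ν ρ) := by
  constructor
  rw [collision, Measure.smul_apply, Measure.finset_sum_apply, smul_eq_mul]
  simp only [measure_univ, Finset.sum_const, Finset.card_univ, Fintype.card_finset,
    Fintype.card_fin, nsmul_eq_mul, mul_one]
  rw [Nat.cast_pow, Nat.cast_ofNat, ENNReal.inv_mul_cancel] <;> simp

instance iterateRec_prob {n : ℕ} (μ : Measure (Cube n)) [IsProbabilityMeasure μ] (t : ℕ) :
    IsProbabilityMeasure (iterateRec n μ t) := by
  induction t with
  | zero => exact ‹_›
  | succ t ih => rw [iterateRec]; exact collision_prob _ _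

lemma collision_singleton {n : ℕ} (ν : Measure (Cube n)) [IsProbabilityMeasure ν] (σ : Cube n) :
    collision n ν ν {σ} = ((2 : ℝ≥0∞) ^ n)⁻¹ *
      ∑ A : Finset (Fin n),
        ν {a : Cube n | ∀ i ∈ A, a i = σ i} * ν {b : Cube n | ∀ i ∈ Aᶜ, b i = σ i} := by
  rw [collision, Measure.smul_apply, Measure.finset_sum_apply, smul_eq_mul]
  congr 1
  exact Finset.sum_congr rfl fun A _ => recomb_singleton A ν ν σ

/-! ### Index types -/

def Idx : ℕ → Type
  | 0 => PUnit
  | t + 1 => Idx t ⊕ Idx t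

instance IdxFintype : (t : ℕ) → Fintype (Idx t)
  | 0 => inferInstanceAs (Fintype PUnit)
  | t + 1 => letI := IdxFintype t; inferInstanceAs (Fintype (Idx t ⊕ Idx t))

lemma Idx_card : ∀ t, Fintype.card (Idx t) = 2 ^ t
  | 0 => rfl
  | t + 1 => by
    show Fintype.card (Idx t ⊕ Idx t) = 2 ^ (t + 1)
    rw [Fintype.card_sum, Idx_card t]; ring

def combine {n : ℕ} {κ : Type} (A : Finset (Fin n)) (f g : Fin n → κ) : Fin n → κ ⊕ κ :=
  fun i => if i ∈ A then Sum.inl (f i) else Sum.inr (g i)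

def combineEquiv {n : ℕ} {κ : Type} :
    (Finset (Fin n) × (Fin n → κ) × (Fin n → κ)) ≃ ((Fin n → κ ⊕ κ) × (Fin n → κ)) where
  toFun p := (combine p.1 p.2.1 p.2.2, fun i => if i ∈ p.1 then p.2.2 i else p.2.1 i)
  invFun q := (Finset.univ.filter (fun i => (q.1 i).isLeft),
               fun i => Sum.elim id (fun _ => q.2 i) (q.1 i),
               fun i => Sum.elim (fun _ => q.2 i) id (q.1 i))
  left_inv := by
    rintro ⟨A, f, g⟩
    refine Prod.ext ?_ (Prod.ext ?_ ?_) <;> simp only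
    · ext i
      rw [Finset.mem_filter]
      by_cases hi : i ∈ A <;> simp [combine, hi]
    · funext i
      by_cases hi : i ∈ A <;> simp [combine, hi]
    · funext i
      by_cases hi : i ∈ A <;> simp [combine, hi]
  right_inv := by
    rintro ⟨h, e⟩
    refine Prod.ext ?_ ?_ <;> simp only
    · funext i
      rcases hc : h i with a | b <;> simp [combine, hc]
    · funext i
      rcases hc : h i with a | b <;> simp [hc]

lemma sum_combine {n : ℕ} {κ : Type} [Fintype κ] (F : (Fin n → κ ⊕ κ) → ℝ≥0∞) :
    ∑ A : Finset (Fin n), ∑ f : Fin n → κ, ∑ g : Fin n → κ, F (combine A f g)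
      = (Fintype.card κ ^ n : ℕ) * ∑ h : Fin n → κ ⊕ κ, F h := by
  have h1 : ∑ A : Finset (Fin n), ∑ f : Fin n → κ, ∑ g : Fin n → κ, F (combine A f g)
      = ∑ p : Finset (Fin n) × (Fin n → κ) × (Fin n → κ), F ((combineEquiv p).1) := by
    rw [Fintype.sum_prod_type]
    refine Finset.sum_congr rfl fun A _ => ?_
    rw [Fintype.sum_prod_type]
    rfl
  rw [h1, Equiv.sum_comp combineEquiv (fun q => F q.1), Fintype.sum_prod_type]
  simp only [Finset.sum_const, Finset.card_univ, Fintype.card_fun, Fintype.card_fin,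
    nsmul_eq_mul, Nat.cast_pow, Finset.mul_sum]

lemma combine_prod {n : ℕ} {κ : Type} [Fintype κ] (μ : Measure (Cube n))
    (A : Finset (Fin n)) (f g : Fin n → κ) (σ : Cube n) :
    (∏ j : κ, μ {x : Cube n | ∀ i ∈ A, f i = j → x i = σ i}) *
      (∏ j : κ, μ {x : Cube n | ∀ i ∈ Aᶜ, g i = j → x i = σ i})
      = ∏ j : κ ⊕ κ, μ {x : Cube n | ∀ i, combine A f g i = j → x i = σ i} := by
  rw [Fintype.prod_sum_type]
  congr 1
  · refine Finset.prod_congr rfl fun j _ => ?_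
    congr 1
    ext x
    simp only [Set.mem_setOf_eq]
    constructor
    · intro h i hci
      by_cases hiA : i ∈ A
      · simp only [combine, if_pos hiA, Sum.inl.injEq] at hci
        exact h i hiA hci
      · simp only [combine, if_neg hiA] at hci
        exact absurd hci (by simp)
    · intro h i hiA hfi
      exact h i (by simp only [combine, if_pos hiA, hfi])
  · refine Finset.prod_congr rfl fun j _ => ?_
    congr 1
    ext x
    simp only [Set.mem_setOf_eq, Finset.mem_compl]
    constructor
    · intro h i hci
      by_cases hiA : i ∈ A
      · simp only [combine, if_pos hiA] at hci
        exact absurd hci (by simp)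
      · simp only [combine, if_neg hiA, Sum.inr.injEq] at hci
        exact h i hiA hci
    · intro h i hiA hfi
      exact h i (by simp only [combine, if_neg hiA, hfi])

lemma lift_sets {n : ℕ} {κ : Type} [Fintype κ] (ν : Measure (Cube n)) (μ : Measure (Cube n))
    [IsProbabilityMeasure μ] (c : ℝ≥0∞)
    (h : ∀ σ : Cube n, ν {σ} = c * ∑ f : Fin n → κ, pushMap κ μ f {σ}) (E : Set (Cube n)) :
    ν E = c * ∑ f : Fin n → κ, pushMap κ μ f E := by
  classical
  set T := (Set.toFinite E).toFinset with hTdef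
  have hT : ↑T = E := Set.Finite.coe_toFinset _
  rw [meas_eq_sum ν E T hT]
  calc ∑ σ ∈ T, ν {σ} = ∑ σ ∈ T, c * ∑ f : Fin n → κ, pushMap κ μ f {σ} :=
        Finset.sum_congr rfl fun σ _ => h σ
    _ = c * ∑ σ ∈ T, ∑ f : Fin n → κ, pushMap κ μ f {σ} := by rw [Finset.mul_sum]
    _ = c * ∑ f : Fin n → κ, ∑ σ ∈ T, pushMap κ μ f {σ} := by rw [Finset.sum_comm]
    _ = c * ∑ f : Fin n → κ, pushMap κ μ f E := by
        congr 1
        exact Finset.sum_congr rfl fun f _ => (meas_eq_sum _ E T hT).symm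

lemma two_pow_ne_zero (a : ℕ) : ((2 : ℝ≥0∞) ^ a) ≠ 0 := by positivity

lemma two_pow_ne_top (a : ℕ) : ((2 : ℝ≥0∞) ^ a) ≠ ∞ := by
  exact ENNReal.pow_ne_top (by simp)

lemma inv_pow_mul {a b : ℕ} :
    ((2 : ℝ≥0∞) ^ a)⁻¹ * ((2 : ℝ≥0∞) ^ b)⁻¹ = ((2 : ℝ≥0∞) ^ (a + b))⁻¹ := by
  rw [pow_add, ENNReal.mul_inv (Or.inl (two_pow_ne_zero a)) (Or.inl (two_pow_ne_top a))]

/-- The key representation: `μ_t` is the average over block assignments `f : [n] → [2^t]`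
of the product-of-marginals measures `pushMap f μ`. -/
lemma rep {n : ℕ} (μ : Measure (Cube n)) [IsProbabilityMeasure μ] :
    ∀ t (σ : Cube n), iterateRec n μ t {σ}
      = ((2 : ℝ≥0∞) ^ (n * t))⁻¹ * ∑ f : Fin n → Idx t, pushMap (Idx t) μ f {σ} := by
  intro t
  induction t with
  | zero =>
    intro σ
    haveI : Unique (Idx 0) := ⟨⟨PUnit.unit⟩, fun _ => rfl⟩
    rw [show iterateRec n μ 0 = μ from rfl]
    simp only [Nat.mul_zero, pow_zero, inv_one, one_mul]
    rw [Fintype.sum_unique]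
    rw [pushMap_singleton, Fintype.prod_unique]
    congr 1
    ext x
    simp only [Set.mem_setOf_eq, Set.mem_singleton_iff]
    constructor
    · rintro rfl i _; rfl
    · intro hx; exact funext fun i => hx i (Subsingleton.elim _ _)
  | succ t ih =>
    intro σ
    haveI : IsProbabilityMeasure (iterateRec n μ t) := iterateRec_prob μ t
    have ihset := lift_sets (iterateRec n μ t) μ _ ih
    rw [show iterateRec n μ (t + 1)
        = collision n (iterateRec n μ t) (iterateRec n μ t) from rfl]
    rw [collision_singleton]
    set c : ℝ≥0∞ := ((2 : ℝ≥0∞) ^ (n * t))⁻¹ with hc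
    have hA : ∀ A : Finset (Fin n),
        (iterateRec n μ t) {a : Cube n | ∀ i ∈ A, a i = σ i}
          * (iterateRec n μ t) {b : Cube n | ∀ i ∈ Aᶜ, b i = σ i}
        = c * c * ∑ f : Fin n → Idx t, ∑ g : Fin n → Idx t,
            (∏ j : Idx t ⊕ Idx t,
              μ {x : Cube n | ∀ i, combine A f g i = j → x i = σ i}) := by
      intro A
      rw [ihset _, ihset _]
      have h1 : ∑ f : Fin n → Idx t, pushMap (Idx t) μ f {a : Cube n | ∀ i ∈ A, a i = σ i}
          = ∑ f : Fin n → Idx t, ∏ j : Idx t, μ {x : Cube n | ∀ i ∈ A, f i = j → x i = σ i} :=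
        Finset.sum_congr rfl fun f _ => pushMap_cyl (Idx t) μ f A σ
      have h2 : ∑ g : Fin n → Idx t, pushMap (Idx t) μ g {b : Cube n | ∀ i ∈ Aᶜ, b i = σ i}
          = ∑ g : Fin n → Idx t, ∏ j : Idx t, μ {x : Cube n | ∀ i ∈ Aᶜ, g i = j → x i = σ i} :=
        Finset.sum_congr rfl fun g _ => pushMap_cyl (Idx t) μ g Aᶜ σ
      rw [h1, h2, mul_mul_mul_comm, Finset.sum_mul_sum]
      congr 1
      refine Finset.sum_congr rfl fun f _ => Finset.sum_congr rfl fun g _ => ?_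
      exact combine_prod μ A f g σ
    rw [Finset.sum_congr rfl (fun A _ => hA A), ← Finset.mul_sum,
      sum_combine (fun h => ∏ j : Idx t ⊕ Idx t,
        μ {x : Cube n | ∀ i, h i = j → x i = σ i})]
    have hfold : ∑ h : Fin n → Idx t ⊕ Idx t,
        (∏ j : Idx t ⊕ Idx t, μ {x : Cube n | ∀ i, h i = j → x i = σ i})
        = ∑ f : Fin n → Idx (t + 1), pushMap (Idx (t + 1)) μ f {σ} :=
      Finset.sum_congr rfl fun h _ => (pushMap_singleton _ μ h σ).symm
    rw [hfold]
    have hN : ((Fintype.card (Idx t) ^ n : ℕ) : ℝ≥0∞) = (2 : ℝ≥0∞) ^ (n * t) := by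
      rw [Idx_card]
      push_cast
      rw [← pow_mul, Nat.mul_comm]
    rw [hN, hc]
    have hs : ((2 : ℝ≥0∞) ^ n)⁻¹ * (((2 : ℝ≥0∞) ^ (n * t))⁻¹ * ((2 : ℝ≥0∞) ^ (n * t))⁻¹
          * (2 : ℝ≥0∞) ^ (n * t)) = ((2 : ℝ≥0∞) ^ (n * (t + 1)))⁻¹ := by
      rw [mul_assoc, ENNReal.inv_mul_cancel (two_pow_ne_zero _) (two_pow_ne_top _), mul_one,
        inv_pow_mul]
      congr 1
      ring
    trans (((2 : ℝ≥0∞) ^ n)⁻¹ * (((2 : ℝ≥0∞) ^ (n * t))⁻¹ * ((2 : ℝ≥0∞) ^ (n * t))⁻¹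
          * (2 : ℝ≥0∞) ^ (n * t))) * ∑ f : Fin n → Idx (t + 1), pushMap (Idx (t + 1)) μ f {σ}
    · ring
    · rw [hs]

/-- For injective block assignments, the push-forward is uniform. -/
lemma pushMap_inj {n : ℕ} {κ : Type} [Fintype κ] (μ : Measure (Cube n))
    [IsProbabilityMeasure μ]
    (hbal : ∀ i : Fin n, μ {σ : Cube n | (σ i : ℤ) = 1} = 1 / 2
      ∧ μ {σ : Cube n | (σ i : ℤ) = -1} = 1 / 2)
    {f : Fin n → κ} (hf : Function.Injective f) (σ : Cube n) :
    pushMap κ μ f {σ} = ((2 : ℝ≥0∞) ^ n)⁻¹ := by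
  classical
  rw [pushMap_singleton]
  rw [← Finset.prod_mul_prod_compl (Finset.univ.image f)]
  have h2 : ∏ j ∈ (Finset.univ.image f)ᶜ, μ {x : Cube n | ∀ i, f i = j → x i = σ i} = 1 := by
    refine Finset.prod_eq_one fun j hj => ?_
    have hset : {x : Cube n | ∀ i, f i = j → x i = σ i} = Set.univ := by
      refine Set.eq_univ_iff_forall.2 fun x i hfi => ?_
      exfalso
      rw [Finset.mem_compl, Finset.mem_image] at hj
      exact hj ⟨i, Finset.mem_univ i, hfi⟩
    rw [hset, measure_univ]
  rw [h2, mul_one]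
  rw [Finset.prod_image (fun i _ i' _ h => hf h)]
  have h3 : ∀ i : Fin n, μ {x : Cube n | ∀ i', f i' = f i → x i' = σ i'} = 2⁻¹ := by
    intro i
    have hset : {x : Cube n | ∀ i', f i' = f i → x i' = σ i'} = {x : Cube n | x i = σ i} := by
      ext x
      simp only [Set.mem_setOf_eq]
      constructor
      · intro h; exact h i rfl
      · intro h i' hfi; rwa [hf hfi]
    rw [hset]
    have hval : ((σ i : ℤ) = 1) ∨ ((σ i : ℤ) = -1) := by
      rcases (σ i).2 with h | h
      · exact Or.inr h
      · exact Or.inl h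
    rcases hval with h | h
    · have : {x : Cube n | x i = σ i} = {x : Cube n | (x i : ℤ) = 1} := by
        ext x; simp only [Set.mem_setOf_eq, Subtype.ext_iff, h]
      rw [this, (hbal i).1, one_div]
    · have : {x : Cube n | x i = σ i} = {x : Cube n | (x i : ℤ) = -1} := by
        ext x; simp only [Set.mem_setOf_eq, Subtype.ext_iff, h]
      rw [this, (hbal i).2, one_div]
  rw [Finset.prod_congr rfl (fun i _ => h3 i), Finset.prod_const, Finset.card_univ,
    Fintype.card_fin, ENNReal.inv_pow]

lemma unif_singleton {n : ℕ} (σ : Cube n) :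
    (PMF.uniformOfFintype (Cube n)).toMeasure {σ} = ((2 : ℝ≥0∞) ^ n)⁻¹ := by
  rw [PMF.toMeasure_apply_singleton _ _ (measAll _), PMF.uniformOfFintype_apply]
  have : Fintype.card (Cube n) = 2 ^ n := by simp [Fintype.card_fun]
  rw [this]
  push_cast
  rfl

/-- Counting inequality: `2·m^n ≤ 2·m^(n̲) + n(n-1)m^(n-1)`. -/
lemma count_ineq : ∀ n m : ℕ, 2 * m ^ n ≤ 2 * m.descFactorial n + n * (n - 1) * m ^ (n - 1) := by
  intro n
  induction n with
  | zero => simp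
  | succ k ih =>
    intro m
    rcases Nat.eq_zero_or_pos k with hk | hk
    · subst hk
      simp [Nat.descFactorial]
    have h1 := ih m
    have h2 : m.descFactorial (k + 1) = (m - k) * m.descFactorial k := Nat.descFactorial_succ m k
    have h3 : m * m.descFactorial k ≤ (m - k) * m.descFactorial k + k * m.descFactorial k := by
      rw [← Nat.add_mul]
      exact Nat.mul_le_mul_right _ (le_trans (le_max_left m k) (le_of_eq (Nat.sub_add_eq_max m k).symm))
    have h4 : m.descFactorial k ≤ m ^ k := Nat.descFactorial_le_pow m k
    have h5 : m ^ (k - 1) * m = m ^ k := by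
      rw [← pow_succ]
      congr 1
      omega
    have h6 : k + 1 - 1 = k := rfl
    calc 2 * m ^ (k + 1) = m * (2 * m ^ k) := by ring
      _ ≤ m * (2 * m.descFactorial k + k * (k - 1) * m ^ (k - 1)) := Nat.mul_le_mul_left m h1
      _ = 2 * (m * m.descFactorial k) + k * (k - 1) * (m ^ (k - 1) * m) := by ring
      _ ≤ 2 * ((m - k) * m.descFactorial k + k * m.descFactorial k)
            + k * (k - 1) * (m ^ (k - 1) * m) := by
          exact Nat.add_le_add_right (Nat.mul_le_mul_left 2 h3) _
      _ = 2 * m.descFactorial (k + 1) + 2 * k * m.descFactorial k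
            + k * (k - 1) * m ^ k := by rw [h2, h5]; ring
      _ ≤ 2 * m.descFactorial (k + 1) + 2 * k * m ^ k + k * (k - 1) * m ^ k := by
          exact Nat.add_le_add_right (Nat.add_le_add_left
            (Nat.mul_le_mul_left _ h4) _) _
      _ ≤ 2 * m.descFactorial (k + 1) + (k + 1) * (k + 1 - 1) * m ^ (k + 1 - 1) := by
          rw [h6]
          have : 2 * k * m ^ k + k * (k - 1) * m ^ k ≤ (k + 1) * k * m ^ k := by
            rw [← Nat.add_mul]
            refine Nat.mul_le_mul_right _ ?_
            have : k - 1 + 1 = k := by omega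
            nlinarith [this]
          omega

/-- For any balanced initial distribution `μ` on `{−1,1}^n`,
`‖μ_t − π‖_TV ≤ (1/2)n(n−1)2^{−t}` where `π` is uniform. -/
theorem stmt_15 (n : ℕ) (μ : Measure (Cube n)) [IsProbabilityMeasure μ]
    (hbal : ∀ i : Fin n, μ {σ : Cube n | (σ i : ℤ) = 1} = 1 / 2
      ∧ μ {σ : Cube n | (σ i : ℤ) = -1} = 1 / 2) (t : ℕ) :
    tvDist (iterateRec n μ t) (PMF.uniformOfFintype (Cube n)).toMeasure
      ≤ (1 / 2) * n * (n - 1) * ((2 : ℝ) ^ t)⁻¹ := by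
  classical
  set π := (PMF.uniformOfFintype (Cube n)).toMeasure with hπdef
  haveI : IsProbabilityMeasure π := PMF.toMeasure.isProbabilityMeasure _
  haveI : IsProbabilityMeasure (iterateRec n μ t) := iterateRec_prob μ t
  haveI : Nonempty {E : Set (Cube n) // MeasurableSet E} := ⟨⟨∅, MeasurableSet.empty⟩⟩
  -- counting setup
  set K : Finset (Fin n → Idx t) :=
    Finset.univ.filter (fun f => ¬ Function.Injective f) with hKdef
  have hinjcard : (Finset.univ.filter (fun f : Fin n → Idx t => Function.Injective f)).card
      = Nat.descFactorial (2 ^ t) n := by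
    rw [← Fintype.card_subtype,
      Fintype.card_congr (Equiv.subtypeInjectiveEquivEmbedding (Fin n) (Idx t)),
      Fintype.card_embedding_eq, Idx_card, Fintype.card_fin]
  have hNcard : Fintype.card (Fin n → Idx t) = (2 ^ t) ^ n := by
    rw [Fintype.card_fun, Idx_card, Fintype.card_fin]
  have hsplit : (Finset.univ.filter (fun f : Fin n → Idx t => Function.Injective f)).card
      + K.card = (2 ^ t) ^ n := by
    have h := Finset.card_filter_add_card_filter_not
      (s := (Finset.univ : Finset (Fin n → Idx t)))
      (p := fun f => Function.Injective f)
    rw [Finset.card_univ, hNcard] at h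
    simpa [hKdef] using h
  rw [hinjcard] at hsplit
  have hcount := count_ineq n (2 ^ t)
  have hKc : 2 * K.card ≤ n * (n - 1) * (2 ^ t) ^ (n - 1) := by
    have hle : Nat.descFactorial (2 ^ t) n ≤ (2 ^ t) ^ n := Nat.descFactorial_le_pow _ _
    omega
  refine ciSup_le ?_
  rintro ⟨E, -⟩
  simp only
  have hrep := lift_sets (iterateRec n μ t) μ _ (rep μ t) E
  have hb : ∀ f : Fin n → Idx t,
      |(pushMap (Idx t) μ f E).toReal - (π E).toReal|
        ≤ (if Function.Injective f then (0 : ℝ) else 1) := by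
    intro f
    by_cases hf : Function.Injective f
    · rw [if_pos hf]
      have heq : pushMap (Idx t) μ f E = π E := by
        set T := (Set.toFinite E).toFinset with hT1
        have hT : ↑T = E := Set.Finite.coe_toFinset _
        rw [meas_eq_sum _ E T hT, meas_eq_sum π E T hT]
        refine Finset.sum_congr rfl fun σ _ => ?_
        rw [pushMap_inj μ hbal hf σ, hπdef, unif_singleton]
      rw [heq, sub_self, abs_zero]
    · rw [if_neg hf]
      have h1 : (pushMap (Idx t) μ f E).toReal ≤ 1 := by
        have := ENNReal.toReal_mono ENNReal.one_ne_top (prob_le_one (μ := pushMap (Idx t) μ f) (s := E))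
        simpa using this
      have h2 : (π E).toReal ≤ 1 := by
        have := ENNReal.toReal_mono ENNReal.one_ne_top (prob_le_one (μ := π) (s := E))
        simpa using this
      have h3 : 0 ≤ (pushMap (Idx t) μ f E).toReal := ENNReal.toReal_nonneg
      have h4 : 0 ≤ (π E).toReal := ENNReal.toReal_nonneg
      rw [abs_le]
      constructor <;> linarith
  -- convert to real sums
  have hX : (iterateRec n μ t E).toReal
      = (((2 : ℝ) ^ (n * t))⁻¹) * ∑ f : Fin n → Idx t, (pushMap (Idx t) μ f E).toReal := by
    rw [hrep, ENNReal.toReal_mul, ENNReal.toReal_inv,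
      ENNReal.toReal_sum (fun f _ => measure_ne_top _ _)]
    norm_num
  have hcards : (((2 ^ t) ^ n : ℕ) : ℝ) = (2 : ℝ) ^ (n * t) := by
    push_cast
    rw [← pow_mul, Nat.mul_comm]
  have hP : (π E).toReal
      = (((2 : ℝ) ^ (n * t))⁻¹) * ∑ _f : Fin n → Idx t, (π E).toReal := by
    rw [Finset.sum_const, Finset.card_univ, hNcard, nsmul_eq_mul, hcards, ← mul_assoc,
      inv_mul_cancel₀ (by positivity), one_mul]
  rw [hX, hP, ← mul_sub, ← Finset.sum_sub_distrib, abs_mul,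
    abs_of_nonneg (by positivity : (0:ℝ) ≤ ((2 : ℝ) ^ (n * t))⁻¹)]
  have hstep : |∑ f : Fin n → Idx t, ((pushMap (Idx t) μ f E).toReal - (π E).toReal)|
      ≤ (K.card : ℝ) := by
    calc |∑ f : Fin n → Idx t, ((pushMap (Idx t) μ f E).toReal - (π E).toReal)|
        ≤ ∑ f : Fin n → Idx t, |(pushMap (Idx t) μ f E).toReal - (π E).toReal| :=
          Finset.abs_sum_le_sum_abs _ _
      _ ≤ ∑ f : Fin n → Idx t, (if Function.Injective f then (0 : ℝ) else 1) :=
          Finset.sum_le_sum fun f _ => hb f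
      _ = (K.card : ℝ) := by
          rw [Finset.sum_ite, Finset.sum_const_zero, zero_add, Finset.sum_const,
            nsmul_eq_mul, mul_one, hKdef]
  calc ((2 : ℝ) ^ (n * t))⁻¹
        * |∑ f : Fin n → Idx t, ((pushMap (Idx t) μ f E).toReal - (π E).toReal)|
      ≤ ((2 : ℝ) ^ (n * t))⁻¹ * (K.card : ℝ) :=
        mul_le_mul_of_nonneg_left hstep (by positivity)
    _ ≤ (1 / 2) * n * ((n : ℝ) - 1) * ((2 : ℝ) ^ t)⁻¹ := by
        rcases Nat.eq_zero_or_pos n with hn | hn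
        · subst hn
          have : K.card = 0 := by omega
          simp [this]
        · have hKR : 2 * (K.card : ℝ) ≤ (n : ℝ) * ((n : ℝ) - 1) * ((2 : ℝ) ^ t) ^ (n - 1) := by
            have := hKc
            have hcast : ((n - 1 : ℕ) : ℝ) = (n : ℝ) - 1 := by
              rw [Nat.cast_sub hn]; norm_num
            calc 2 * (K.card : ℝ) = ((2 * K.card : ℕ) : ℝ) := by push_cast; ring
              _ ≤ ((n * (n - 1) * (2 ^ t) ^ (n - 1) : ℕ) : ℝ) := by exact_mod_cast this
              _ = (n : ℝ) * ((n : ℝ) - 1) * ((2 : ℝ) ^ t) ^ (n - 1) := by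
                  push_cast [hcast]; ring
          set M : ℝ := (2 : ℝ) ^ t with hM
          have hM0 : 0 < M := by positivity
          have hMn : (2 : ℝ) ^ (n * t) = M ^ n := by
            rw [hM, ← pow_mul, Nat.mul_comm]
          have hMsplit : M ^ n = M ^ (n - 1) * M := by
            rw [← pow_succ]
            congr 1
            omega
          have hKR2 : (K.card : ℝ) ≤ (1 / 2) * (n : ℝ) * ((n : ℝ) - 1) * M ^ (n - 1) := by
            linarith
          rw [hMn]
          calc (M ^ n)⁻¹ * (K.card : ℝ)
              ≤ (M ^ n)⁻¹ * ((1 / 2) * (n : ℝ) * ((n : ℝ) - 1) * M ^ (n - 1)) :=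
                mul_le_mul_of_nonneg_left hKR2 (by positivity)
            _ = (1 / 2) * (n : ℝ) * ((n : ℝ) - 1) * M⁻¹ := by
                rw [hMsplit, mul_inv]
                have hMn1 : (M : ℝ) ^ (n - 1) ≠ 0 := by positivity
                field_simp
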